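/- Let Φ be a quantum channel of the form Φ(X) = (1−η) tr(X) χ + η N(X) with 0 < η < 1, χ a density operator with tr(χ²) > 0, and N a quantum channel. Then Φ cannot be of the form X ↦ V X V† for an isometry V. More precisely, for orthogonal unit vectors ψ ⊥ φ, tr(Φ(|ψ⟩⟨ψ|)Φ(|φ⟩⟨φ|)) ≥ (1−η)² tr(χ²) > 0, whereas tr(V|ψ⟩⟨ψ|V† · V|φ⟩⟨φ|V†) = |⟨ψ|φ⟩|² = 0. -/

import Mathlib

open Matrix
open scoped ComplexOrder

lemma psd_trace_nonneg {n : Type*} [Fintype n] [DecidableEq n] {A : Matrix n n ℂ}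
    (hA : A.PosSemidef) : 0 ≤ A.trace := by
  unfold Matrix.trace
  refine Finset.sum_nonneg fun i _ => ?_
  have := hA.dotProduct_mulVec_nonneg (Pi.single i 1)
  simpa [dotProduct, Matrix.mulVec, Pi.single_apply, Finset.sum_ite_eq,
    Matrix.diag] using this

lemma psd_trace_mul_nonneg {n : Type*} [Fintype n] [DecidableEq n]
    {A B : Matrix n n ℂ} (hA : A.PosSemidef) (hB : B.PosSemidef) :
    0 ≤ (A * B).trace := by
  obtain ⟨C, rfl⟩ : ∃ C : Matrix n n ℂ, A = Cᴴ * C := by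
    open scoped MatrixOrder in
    obtain ⟨X, hX, -, hXA⟩ :=
      CFC.exists_sqrt_of_isSelfAdjoint_of_quasispectrumRestricts hA.isHermitian
        (QuasispectrumRestricts.nnreal_of_nonneg hA.nonneg)
    exact ⟨X, by rw [← Matrix.star_eq_conjTranspose, hX.star_eq, hXA]⟩
  have h1 : (C * B * Cᴴ).trace = (Cᴴ * (C * B)).trace := Matrix.trace_mul_comm _ _
  rw [show Cᴴ * C * B = Cᴴ * (C * B) from Matrix.mul_assoc _ _ _, ← h1]
  exact psd_trace_nonneg (hB.mul_mul_conjTranspose_same C)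

lemma vecMulVec_star_posSemidef {n : Type*} [Fintype n] (v : n → ℂ) :
    (Matrix.vecMulVec v (star v)).PosSemidef := by
  refine Matrix.PosSemidef.of_dotProduct_mulVec_nonneg ?_ ?_
  · ext i j
    simp [Matrix.conjTranspose_apply, Matrix.vecMulVec_apply, mul_comm]
  · intro x
    have : dotProduct (star x) ((Matrix.vecMulVec v (star v)) *ᵥ x)
        = (starRingEnd ℂ) (∑ k, (starRingEnd ℂ) (v k) * x k) *
          (∑ k, (starRingEnd ℂ) (v k) * x k) := by
      simp only [dotProduct, Matrix.mulVec, Matrix.vecMulVec_apply, Pi.star_apply,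
        map_sum, _root_.map_mul, Complex.conj_conj, Finset.mul_sum, Finset.sum_mul]
      rw [Finset.sum_comm]
      refine Finset.sum_congr rfl fun i _ => Finset.sum_congr rfl fun k _ => ?_
      simp [RCLike.star_def]
      ring
    rw [this]
    exact star_mul_self_nonneg _

lemma vecMulVec_star_trace {n : Type*} [Fintype n] (v : n → ℂ)
    (hv : ∑ i, (starRingEnd ℂ) (v i) * v i = 1) :
    (Matrix.vecMulVec v (star v)).trace = 1 := by
  unfold Matrix.trace
  rw [← hv]
  refine Finset.sum_congr rfl fun i _ => ?_
  simp [Matrix.diag, Matrix.vecMulVec_apply, RCLike.star_def, mul_comm]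

/-- A quantum channel with a forgetful component, `Φ(X) = (1−η) tr(X) χ + η N(X)`
with `0 < η < 1`, `χ` a density operator with `tr(χ²) > 0` and `N` a channel, cannot
be a conjugation `X ↦ V X Vᴴ` by an isometry: for orthogonal unit vectors `ψ ⊥ φ`,
`tr(Φ(|ψ⟩⟨ψ|)Φ(|φ⟩⟨φ|)) ≥ (1−η)² tr(χ²) > 0`, whereas
`tr(V|ψ⟩⟨ψ|Vᴴ · V|φ⟩⟨φ|Vᴴ) = |⟨ψ|φ⟩|² = 0`. -/
theorem forgetful_channel_not_isometric_conjugation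
    {s m : Type*} [Fintype s] [Fintype m] [DecidableEq m]
    (η : ℝ) (hη0 : 0 < η) (hη1 : η < 1)
    (χ : Matrix (s × m) (s × m) ℂ) (hχ : χ.PosSemidef) (hχtr : χ.trace = 1)
    (hχ2 : 0 < ((χ * χ).trace).re
    )
    (N : Matrix m m ℂ →ₗ[ℂ] Matrix (s × m) (s × m) ℂ)
    (hNpos : ∀ X : Matrix m m ℂ, X.PosSemidef → (N X).PosSemidef)
    (hNtr : ∀ X : Matrix m m ℂ, (N X).trace = X.trace)
    (Φ : Matrix m m ℂ →ₗ[ℂ] Matrix (s × m) (s × m) ℂ)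
    (hΦ : ∀ X : Matrix m m ℂ,
      Φ X = ((1 - η : ℝ) : ℂ) • (X.trace • χ) + (η : ℂ) • N X)
    (ψ φ : m → ℂ)
    (hψ : ∑ i, (starRingEnd ℂ) (ψ i) * ψ i = 1)
    (hφ : ∑ i, (starRingEnd ℂ) (φ i) * φ i = 1)
    (horth : ∑ i, (starRingEnd ℂ) (ψ i) * φ i = 0) :
    (((1 - η) ^ 2 * ((χ * χ).trace).re ≤
        ((Φ (Matrix.vecMulVec ψ (star ψ)) * Φ (Matrix.vecMulVec φ (star φ))).trace).re) ∧
      (∀ V : Matrix (s × m) m ℂ, Vᴴ * V = 1 →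
        (V * Matrix.vecMulVec ψ (star ψ) * Vᴴ * (V * Matrix.vecMulVec φ (star φ) * Vᴴ)).trace
          = 0)) ∧
      ¬ ∃ V : Matrix (s × m) m ℂ, Vᴴ * V = 1 ∧ ∀ X : Matrix m m ℂ, Φ X = V * X * Vᴴ := by
  classical
  set Pψ := Matrix.vecMulVec ψ (star ψ) with hPψ
  set Pφ := Matrix.vecMulVec φ (star φ) with hPφ
  have hPψpsd : Pψ.PosSemidef := vecMulVec_star_posSemidef ψ
  have hPφpsd : Pφ.PosSemidef := vecMulVec_star_posSemidef φ
  have hΦψ : Φ Pψ = ((1 - η : ℝ) : ℂ) • χ + (η : ℂ) • N Pψ := by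
    rw [hΦ, vecMulVec_star_trace ψ hψ, one_smul]
  have hΦφ : Φ Pφ = ((1 - η : ℝ) : ℂ) • χ + (η : ℂ) • N Pφ := by
    rw [hΦ, vecMulVec_star_trace φ hφ, one_smul]
  -- the trace of Pψ * Pφ is zero, in fact the product itself vanishes
  have hPP : Pψ * Pφ = 0 := by
    ext i j
    simp only [Matrix.mul_apply, Matrix.vecMulVec_apply, Pi.star_apply, Matrix.zero_apply,
      hPψ, hPφ]
    calc ∑ k, ψ i * star (ψ k) * (φ k * star (φ j))
        = ψ i * star (φ j) * ∑ k, (starRingEnd ℂ) (ψ k) * φ k := by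
          rw [Finset.mul_sum]
          refine Finset.sum_congr rfl fun k _ => ?_
          simp [RCLike.star_def]; ring
      _ = 0 := by rw [horth, mul_zero]
  -- part A
  have hA : (1 - η) ^ 2 * ((χ * χ).trace).re ≤ ((Φ Pψ * Φ Pφ).trace).re := by
    have h1 : 0 ≤ ((χ * N Pφ).trace).re :=
      (Complex.nonneg_iff.mp (psd_trace_mul_nonneg hχ (hNpos _ hPφpsd))).1
    have h2 : 0 ≤ ((N Pψ * χ).trace).re :=
      (Complex.nonneg_iff.mp (psd_trace_mul_nonneg (hNpos _ hPψpsd) hχ)).1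
    have h3 : 0 ≤ ((N Pψ * N Pφ).trace).re :=
      (Complex.nonneg_iff.mp
        (psd_trace_mul_nonneg (hNpos _ hPψpsd) (hNpos _ hPφpsd))).1
    have key : ((Φ Pψ * Φ Pφ).trace).re
        = (1 - η) ^ 2 * ((χ * χ).trace).re
          + (1 - η) * η * ((χ * N Pφ).trace).re
          + η * (1 - η) * ((N Pψ * χ).trace).re
          + η ^ 2 * ((N Pψ * N Pφ).trace).re := by
      rw [hΦψ, hΦφ]
      simp only [Matrix.add_mul, Matrix.mul_add, Matrix.smul_mul, Matrix.mul_smul,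
        smul_smul, Matrix.trace_add, Matrix.trace_smul, smul_eq_mul,
        Complex.add_re, ← Complex.ofReal_mul, Complex.re_ofReal_mul]
      ring
    rw [key]
    nlinarith [sq_nonneg η, mul_nonneg (mul_nonneg (by linarith : (0:ℝ) ≤ 1 - η) hη0.le) h1,
      mul_nonneg (mul_nonneg hη0.le (by linarith : (0:ℝ) ≤ 1 - η)) h2,
      mul_nonneg (sq_nonneg η) h3]
  -- part B
  have hB : ∀ V : Matrix (s × m) m ℂ, Vᴴ * V = 1 →
      (V * Pψ * Vᴴ * (V * Pφ * Vᴴ)).trace = 0 := by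
    intro V hV
    have : V * Pψ * Vᴴ * (V * Pφ * Vᴴ) = V * (Pψ * Pφ) * Vᴴ := by
      calc V * Pψ * Vᴴ * (V * Pφ * Vᴴ)
          = V * Pψ * (Vᴴ * V) * Pφ * Vᴴ := by
            simp only [Matrix.mul_assoc]
        _ = V * (Pψ * Pφ) * Vᴴ := by rw [hV]; simp only [Matrix.mul_one, Matrix.mul_assoc]
    rw [this, hPP, Matrix.mul_zero, Matrix.zero_mul, Matrix.trace_zero]
  refine ⟨⟨hA, hB⟩, ?_⟩
  rintro ⟨V, hV, hVΦ⟩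
  have hz : ((Φ Pψ * Φ Pφ).trace) = 0 := by
    rw [hVΦ Pψ, hVΦ Pφ]
    exact hB V hV
  rw [hz] at hA
  simp only [Complex.zero_re] at hA
  nlinarith [mul_pos (pow_pos (by linarith : (0:ℝ) < 1 - η) 2) hχ2]
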